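/- Let (u_n) be a sequence of real numbers with inf_n u_n > 0 and let (ε_n) be a sequence of real numbers with ε_n → 0 and u_n ε_n → 0. Then there exist a constant C < ∞ and an index N such that for all n ≥ N, |Ψ(u_n + ε_n) − Ψ(u_n)| ≤ C·max(u_n, 1)·|ε_n|·Ψ(u_n). -/

import Mathlib

open MeasureTheory

/-- The standard normal density `φ(z) = (2π)^{-1/2} exp(−z²/2)`. -/
noncomputable def phi (x : ℝ) : ℝ := (Real.sqrt (2 * Real.pi))⁻¹ * Real.exp (-x ^ 2 / 2)

/-- The standard Gaussian survival function `Ψ(x) = ∫_x^∞ φ(z) dz`. -/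
noncomputable def Psi (x : ℝ) : ℝ := ∫ z in Set.Ioi x, phi z

lemma phi_pos (x : ℝ) : 0 < phi x := by
  apply mul_pos (inv_pos.mpr (Real.sqrt_pos.mpr (by positivity))) (Real.exp_pos _)

lemma phi_integrable : MeasureTheory.Integrable phi := by
  have h : phi = fun x => (Real.sqrt (2 * Real.pi))⁻¹ * Real.exp (-(1/2) * x ^ 2) := by
    funext x
    unfold phi
    congr 1
    ring_nf
  rw [h]
  exact (integrable_exp_neg_mul_sq (by norm_num)).const_mul _

lemma Psi_nonneg (x : ℝ) : 0 ≤ Psi x :=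
  MeasureTheory.setIntegral_nonneg measurableSet_Ioi (fun t _ => (phi_pos t).le)

lemma Psi_split (a b : ℝ) (hab : a ≤ b) :
    Psi a = (∫ z in Set.Ioc a b, phi z) + Psi b := by
  unfold Psi
  rw [← MeasureTheory.setIntegral_union (Set.Ioc_disjoint_Ioi le_rfl)
    measurableSet_Ioi phi_integrable.integrableOn phi_integrable.integrableOn,
    Set.Ioc_union_Ioi_eq_Ioi hab]

/-- exponential comparison for phi -/
lemma phi_le_mul (s t c : ℝ) (h : t ^ 2 ≤ s ^ 2 + 2 * c) : phi s ≤ Real.exp c * phi t := by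
  unfold phi
  rw [mul_comm (Real.exp c), mul_assoc, ← Real.exp_add]
  have h2 : -s ^ 2 / 2 ≤ -t ^ 2 / 2 + c := by linarith
  have := Real.exp_le_exp.mpr h2
  have hc : 0 ≤ (Real.sqrt (2 * Real.pi))⁻¹ := by positivity
  exact mul_le_mul_of_nonneg_left this hc

lemma sq_bound (v e t : ℝ) (hv0 : 0 < v) (hve : v * |e| ≤ 1)
    (h1 : v - |e| ≤ t) (h2 : t ≤ v + |e|) : v ^ 2 ≤ t ^ 2 + 2 * 1 := by
  nlinarith [mul_nonneg hv0.le (by linarith : (0:ℝ) ≤ t - v + |e|), sq_nonneg (t - v)]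

lemma abs_Psi_sub (a b M : ℝ) (hab : a ≤ b) (hM : ∀ t ∈ Set.Ioc a b, phi t ≤ M) :
    |Psi a - Psi b| ≤ M * (b - a) := by
  rw [Psi_split a b hab, add_sub_cancel_right]
  have h1 : |∫ z in Set.Ioc a b, phi z| ≤ M * (volume (Set.Ioc a b)).toReal := by
    have := MeasureTheory.norm_setIntegral_le_of_norm_le_const (f := phi)
      (s := Set.Ioc a b) (μ := volume) (C := M)
      (by rw [Real.volume_Ioc]; exact ENNReal.ofReal_lt_top)
      (fun x hx => by rw [Real.norm_eq_abs, abs_of_pos (phi_pos x)]; exact hM x hx)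
    simpa [measureReal_def] using this
  rwa [Real.volume_Ioc, ENNReal.toReal_ofReal (by linarith)] at h1

lemma Psi_lower (v : ℝ) (hv : 0 < v) :
    Real.exp (-(3/2)) * (max v 1)⁻¹ * phi v ≤ Psi v := by
  set h : ℝ := (max v 1)⁻¹ with hdef
  have hm1 : (1:ℝ) ≤ max v 1 := le_max_right v 1
  have hh0 : 0 < h := inv_pos.mpr (lt_of_lt_of_le one_pos hm1)
  have hh1 : h ≤ 1 := inv_le_one_of_one_le₀ hm1
  have huh : v * h ≤ 1 := by
    have : v * h ≤ (max v 1) * h := by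
      apply mul_le_mul_of_nonneg_right (le_max_left v 1) hh0.le
    rwa [hdef, mul_inv_cancel₀ (ne_of_gt (lt_of_lt_of_le one_pos hm1))] at this
  have key : Real.exp (-(3/2)) * phi v ≤ phi (v + h) := by
    have := phi_le_mul (v + h) v (3/2) (by nlinarith)
    calc Real.exp (-(3/2)) * phi v ≤ Real.exp (-(3/2)) * (Real.exp (3/2) * phi (v + h)) := by
          have : 0 < Real.exp (-(3/2)) := Real.exp_pos _
          nlinarith [phi_le_mul v (v + h) (3/2) (by nlinarith)]
      _ = phi (v + h) := by rw [← mul_assoc, ← Real.exp_add]; norm_num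
  have hsplit := Psi_split v (v + h) (by linarith)
  have hint : phi (v + h) * h ≤ ∫ z in Set.Ioc v (v + h), phi z := by
    have := MeasureTheory.setIntegral_ge_of_const_le (μ := volume)
      (f := phi) (s := Set.Ioc v (v + h)) (c := phi (v + h))
      measurableSet_Ioc (by rw [Real.volume_Ioc]; exact ENNReal.ofReal_ne_top)
      (fun x hx => by
        apply mul_le_mul_of_nonneg_left _ (by positivity)
        apply Real.exp_le_exp.mpr
        have hx1 : v < x := hx.1
        have hx2 : x ≤ v + h := hx.2
        nlinarith)
      phi_integrable.integrableOn
    rwa [Real.volume_real_Ioc_of_le (by linarith), add_sub_cancel_left, smul_eq_mul, mul_comm] at this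
  have hPnn := Psi_nonneg (v + h)
  have : phi (v + h) * h ≤ Psi v := by rw [hsplit]; linarith
  calc Real.exp (-(3/2)) * h * phi v = (Real.exp (-(3/2)) * phi v) * h := by ring
    _ ≤ phi (v + h) * h := mul_le_mul_of_nonneg_right key hh0.le
    _ ≤ Psi v := this

/-- perturbation bound for the Gaussian survival function
when `u_n ε_n → 0`. -/
theorem stmt1 (u ε : ℕ → ℝ) (hu : 0 < ⨅ n, u n)
    (hε : Filter.Tendsto ε Filter.atTop (nhds 0))
    (huε : Filter.Tendsto (fun n => u n * ε n) Filter.atTop (nhds 0)) :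
    ∃ C : ℝ, ∃ N : ℕ, ∀ n ≥ N,
      |Psi (u n + ε n) - Psi (u n)| ≤ C * max (u n) 1 * |ε n| * Psi (u n) := by
  have hbdd : BddBelow (Set.range u) := by
    by_contra hb
    rw [Real.iInf_of_not_bddBelow hb] at hu
    exact lt_irrefl 0 hu
  have hupos : ∀ n, 0 < u n := fun n => lt_of_lt_of_le hu (ciInf_le hbdd n)
  obtain ⟨N1, hN1⟩ := Metric.tendsto_atTop.mp hε 1 one_pos
  obtain ⟨N2, hN2⟩ := Metric.tendsto_atTop.mp huε 1 one_pos
  refine ⟨Real.exp 1 * Real.exp (3/2), max N1 N2, fun n hn => ?_⟩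
  have hε1 : |ε n| ≤ 1 := by
    have := hN1 n (le_trans (le_max_left _ _) hn)
    rw [Real.dist_eq, sub_zero] at this
    exact this.le
  have huε1 : |u n * ε n| ≤ 1 := by
    have := hN2 n (le_trans (le_max_right _ _) hn)
    rw [Real.dist_eq, sub_zero] at this
    exact this.le
  set v := u n with hv
  set e := ε n with he
  have hv0 : 0 < v := hupos n
  have hve : v * |e| ≤ 1 := by
    rw [← abs_of_pos hv0, ← abs_mul]; exact huε1
  clear_value v e
  -- bound on phi on the interval between v and v+e
  have hphi_bound : ∀ t, min v (v + e) < t → t ≤ max v (v + e) →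
      phi t ≤ Real.exp 1 * phi v := by
    intro t ht1 ht2
    apply phi_le_mul t v 1
    have h1 : v - |e| ≤ t := by
      rcases le_or_gt 0 e with h | h
      · have : min v (v + e) = v := min_eq_left (by linarith)
        rw [this] at ht1
        have : |e| = e := abs_of_nonneg h
        nlinarith [abs_nonneg e]
      · have : min v (v + e) = v + e := min_eq_right (by linarith)
        rw [this] at ht1
        have : |e| = -e := abs_of_neg h
        linarith
    have h2 : t ≤ v + |e| := by
      rcases le_or_gt 0 e with h | h
      · have : max v (v + e) = v + e := max_eq_right (by linarith)
        rw [this] at ht2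
        have : |e| = e := abs_of_nonneg h
        linarith
      · have : max v (v + e) = v := max_eq_left (by linarith)
        rw [this] at ht2
        have : |e| = -e := abs_of_neg h
        nlinarith [abs_nonneg e]
    exact sq_bound v e t hv0 hve h1 h2
  -- step 1: |Psi (v+e) - Psi v| ≤ exp 1 * phi v * |e|
  have step1 : |Psi (v + e) - Psi v| ≤ Real.exp 1 * phi v * |e| := by
    rcases le_or_gt 0 e with h | h
    · have := abs_Psi_sub v (v + e) (Real.exp 1 * phi v) (by linarith)
        (fun t ht => hphi_bound t (by simpa [min_eq_left (by linarith : v ≤ v + e)] using ht.1)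
          (by simpa [max_eq_right (by linarith : v ≤ v + e)] using ht.2))
      rw [abs_sub_comm] at this
      calc |Psi (v + e) - Psi v| ≤ Real.exp 1 * phi v * (v + e - v) := this
        _ = Real.exp 1 * phi v * |e| := by rw [abs_of_nonneg h]; ring_nf
    · have := abs_Psi_sub (v + e) v (Real.exp 1 * phi v) (by linarith)
        (fun t ht => hphi_bound t (by simpa [min_eq_right (by linarith : v + e ≤ v)] using ht.1)
          (by simpa [max_eq_left (by linarith : v + e ≤ v)] using ht.2))
      calc |Psi (v + e) - Psi v| ≤ Real.exp 1 * phi v * (v - (v + e)) := this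
        _ = Real.exp 1 * phi v * |e| := by rw [abs_of_neg h]; ring_nf
  -- step 2: phi v ≤ exp (3/2) * max v 1 * Psi v
  have step2 : phi v ≤ Real.exp (3/2) * max v 1 * Psi v := by
    have hlow := Psi_lower v hv0
    have hm0 : (0:ℝ) < max v 1 := lt_of_lt_of_le one_pos (le_max_right v 1)
    have hE : Real.exp (-(3/2)) = (Real.exp (3/2))⁻¹ := by
      rw [← Real.exp_neg]
    rw [hE] at hlow
    have hE0 : (0:ℝ) < Real.exp (3/2) := Real.exp_pos _
    calc phi v = Real.exp (3/2) * max v 1 * ((Real.exp (3/2))⁻¹ * (max v 1)⁻¹ * phi v) := by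
          field_simp
      _ ≤ Real.exp (3/2) * max v 1 * Psi v := by
          apply mul_le_mul_of_nonneg_left hlow (by positivity)
  calc |Psi (v + e) - Psi v| ≤ Real.exp 1 * phi v * |e| := step1
    _ ≤ Real.exp 1 * (Real.exp (3/2) * max v 1 * Psi v) * |e| := by
        apply mul_le_mul_of_nonneg_right (mul_le_mul_of_nonneg_left step2 (Real.exp_pos 1).le)
          (abs_nonneg e)
    _ = Real.exp 1 * Real.exp (3/2) * max v 1 * |e| * Psi v := by ring
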